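/- Let V be a 4-dimensional real inner product space with orthogonal complex structure J, and let R be an algebraic curvature operator (symmetric endomorphism of Lambda^2 V satisfying the first Bianchi identity). If R satisfies the second Gray condition R_{XYZW} - R_{(JX)(JY)ZW} = R_{(JX)Y(JZ)W} + R_{(JX)YZ(JW)} for all X,Y,Z,W, then R satisfies the third Gray condition R_{XYZW} = R_{(JX)(JY)(JZ)(JW)} for all X,Y,Z,W. -/

import Mathlib

open RealInnerProductSpace

/-- Let `V` be a 4-dimensional real inner product space, `R` an algebraic curvature
operator on `Λ²V` (encoded as the multilinear 4-tensor `R X Y Z W = ⟨R(X∧Y), Z∧W⟩`,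
antisymmetric in the first and last pairs, pair-exchange symmetric — this is the
symmetry of `R` as an endomorphism of `Λ²V` — and satisfying the first Bianchi
identity), and `J` an orthogonal complex structure on `V`. If `R` satisfies the
second Gray condition then it satisfies the third Gray condition. -/
theorem stmt_11 {V : Type*} [NormedAddCommGroup V] [InnerProductSpace ℝ V]
    [FiniteDimensional ℝ V] (hdim : Module.finrank ℝ V = 4)
    (J : V →ₗ[ℝ] V) (hJ2 : ∀ x, J (J x) = -x) (hJo : ∀ x y, ⟪J x, J y⟫ = ⟪x, y⟫)
    (R : V →ₗ[ℝ] V →ₗ[ℝ] V →ₗ[ℝ] V →ₗ[ℝ] ℝ)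
    (hR1 : ∀ X Y Z W, R X Y Z W = -R Y X Z W)
    (hR2 : ∀ X Y Z W, R X Y Z W = -R X Y W Z)
    (hRs : ∀ X Y Z W, R X Y Z W = R Z W X Y)
    (hBianchi : ∀ X Y Z W, R X Y Z W + R Y Z X W + R Z X Y W = 0)
    (hG2 : ∀ X Y Z W, R X Y Z W - R (J X) (J Y) Z W
      = R (J X) Y (J Z) W + R (J X) Y Z (J W)) :
    ∀ X Y Z W, R X Y Z W = R (J X) (J Y) (J Z) (J W) := by
  -- Key consequence of hG2 applied twice:
  have A : ∀ X Y Z W, R X Y Z W - R (J X) (J Y) (J Z) (J W)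
      = R (J X) (J Y) Z W - R X Y (J Z) (J W) := by
    intro X Y Z W
    have h1 := hG2 X Y Z W
    have h2 := hG2 X Y (J Z) (J W)
    rw [hJ2 Z, hJ2 W] at h2
    simp only [map_neg, LinearMap.neg_apply] at h2
    linarith
  -- The "K" tensor
  set K : V → V → V → V → ℝ := fun X Y Z W => R (J X) (J Y) Z W - R X Y (J Z) (J W)
    with hKdef
  have hKswap : ∀ X Y Z W, K Z W X Y = -K X Y Z W := by
    intro X Y Z W
    simp only [hKdef]
    rw [hRs (J Z) (J W) X Y, hRs Z W (J X) (J Y)]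
    ring
  have hKJ1 : ∀ X Y Z W, K (J X) (J Y) Z W = K X Y Z W := by
    intro X Y Z W
    simp only [hKdef]
    rw [hJ2 X, hJ2 Y]
    simp only [map_neg, LinearMap.neg_apply]
    have hX : R (-X) Y Z W = -R X Y Z W := by
      rw [show -X = (-1:ℝ) • X by simp, map_smul]
      simp
    rw [hX]
    have := A X Y Z W
    linarith
  have hKJ2 : ∀ X Y Z W, K X Y (J Z) (J W) = -K X Y Z W := by
    intro X Y Z W
    simp only [hKdef]
    rw [hJ2 Z, hJ2 W]
    simp only [map_neg, LinearMap.neg_apply]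
    have := A X Y Z W
    linarith
  have hK0 : ∀ X Y Z W, K X Y Z W = 0 := by
    intro X Y Z W
    have e1 : K (J Z) (J W) X Y = K Z W X Y := hKJ1 Z W X Y
    have e2 : K Z W X Y = -K X Y Z W := hKswap X Y Z W
    have e3 : K (J Z) (J W) X Y = -K X Y (J Z) (J W) := hKswap X Y (J Z) (J W)
    have e4 : K X Y (J Z) (J W) = -K X Y Z W := hKJ2 X Y Z W
    linarith
  intro X Y Z W
  have := A X Y Z W
  have := hK0 X Y Z W
  simp only [hKdef] at *
  linarith
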